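/- In ℂ³ ⊗ ℂ³ ⊗ ℂ³, consider the family of fully product vectors v(α) = (1, α + α³, α² + α⁶) ⊗ (1, α³, α⁶) ⊗ (1, α, α²) for α ∈ ℂ. The orthogonal complement of the span of {v(α) : α ∈ ℂ} is a genuinely entangled subspace of dimension 12. -/

import Mathlib

set_option maxRecDepth 8000
set_option maxHeartbeats 1000000

noncomputable section

abbrev TriH (d₁ d₂ d₃ : ℕ) := EuclideanSpace ℂ (Fin d₁ × Fin d₂ × Fin d₃)

def BiprodA {d₁ d₂ d₃ : ℕ} (ψ : TriH d₁ d₂ d₃) : Prop :=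
  ∃ (a : Fin d₁ → ℂ) (g : Fin d₂ × Fin d₃ → ℂ), ∀ i j k, ψ (i, j, k) = a i * g (j, k)

def BiprodB {d₁ d₂ d₃ : ℕ} (ψ : TriH d₁ d₂ d₃) : Prop :=
  ∃ (b : Fin d₂ → ℂ) (g : Fin d₁ × Fin d₃ → ℂ), ∀ i j k, ψ (i, j, k) = b j * g (i, k)

def BiprodC {d₁ d₂ d₃ : ℕ} (ψ : TriH d₁ d₂ d₃) : Prop :=
  ∃ (c : Fin d₃ → ℂ) (g : Fin d₁ × Fin d₂ → ℂ), ∀ i j k, ψ (i, j, k) = c k * g (i, j)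

def IsGME3 {d₁ d₂ d₃ : ℕ} (ψ : TriH d₁ d₂ d₃) : Prop :=
  ψ ≠ 0 ∧ ¬ BiprodA ψ ∧ ¬ BiprodB ψ ∧ ¬ BiprodC ψ

def IsGES3 {d₁ d₂ d₃ : ℕ} (V : Submodule ℂ (TriH d₁ d₂ d₃)) : Prop :=
  ∀ ψ ∈ V, ψ ≠ 0 → IsGME3 ψ

/-- The family of fully product vectors
`v(α) = (1, α + α³, α² + α⁶) ⊗ (1, α³, α⁶) ⊗ (1, α, α²)` in `ℂ³ ⊗ ℂ³ ⊗ ℂ³`. -/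
def qutritCurve (α : ℂ) : TriH 3 3 3 :=
  WithLp.toLp 2 (fun p : Fin 3 × Fin 3 × Fin 3 => ![(1 : ℂ), α + α ^ 3, α ^ 2 + α ^ 6] p.1 *
    ![(1 : ℂ), α ^ 3, α ^ 6] p.2.1 * ![(1 : ℂ), α, α ^ 2] p.2.2)

open Finset

/-! ### Polynomial helper lemmas -/

lemma polysum_coeff_zero {N : ℕ} {c : ℕ → ℂ}
    (h : (∑ k ∈ Finset.range N, Polynomial.C (c k) * Polynomial.X ^ k) = 0) :
    ∀ n < N, c n = 0 := by
  intro n hn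
  have := congrArg (Polynomial.coeff · n) h
  simpa [Polynomial.finset_sum_coeff, Polynomial.coeff_C_mul, Polynomial.coeff_X_pow,
    Finset.sum_ite_eq', hn] using this

lemma coeffs_zero {N : ℕ} {c : ℕ → ℂ}
    (h : ∀ β : ℂ, ∑ n ∈ Finset.range N, c n * β ^ n = 0) : ∀ n < N, c n = 0 := by
  apply polysum_coeff_zero
  apply Polynomial.zero_of_eval_zero
  intro x
  simpa [Polynomial.eval_finset_sum] using h x

lemma mul_coeffs_zero {N M : ℕ} {c d : ℕ → ℂ}
    (h : ∀ β : ℂ, (∑ n ∈ Finset.range N, c n * β ^ n) * (∑ n ∈ Finset.range M, d n * β ^ n) = 0) :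
    (∀ n < N, c n = 0) ∨ (∀ n < M, d n = 0) := by
  have hpq : (∑ k ∈ Finset.range N, Polynomial.C (c k) * Polynomial.X ^ k) *
      (∑ k ∈ Finset.range M, Polynomial.C (d k) * Polynomial.X ^ k) = 0 := by
    apply Polynomial.zero_of_eval_zero
    intro x
    simpa [Polynomial.eval_finset_sum] using h x
  rcases mul_eq_zero.mp hpq with h' | h'
  · exact Or.inl (polysum_coeff_zero h')
  · exact Or.inr (polysum_coeff_zero h')

/-! ### Orthogonality of the curve -/

lemma conj_curve (β : ℂ) (p : Fin 3 × Fin 3 × Fin 3) :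
    (starRingEnd ℂ) (qutritCurve ((starRingEnd ℂ) β) p) = qutritCurve β p := by
  obtain ⟨i, j, k⟩ := p
  fin_cases i <;> fin_cases j <;> fin_cases k <;>
    simp [qutritCurve, map_add, map_mul, map_pow]

lemma perp_eval {ψ : TriH 3 3 3}
    (hψ : ψ ∈ (Submodule.span ℂ (Set.range qutritCurve))ᗮ) (β : ℂ) :
    ∑ p : Fin 3 × Fin 3 × Fin 3, qutritCurve β p * ψ p = 0 := by
  have hmem : qutritCurve ((starRingEnd ℂ) β) ∈ Submodule.span ℂ (Set.range qutritCurve) :=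
    Submodule.subset_span ⟨_, rfl⟩
  have h0 := (Submodule.mem_orthogonal _ ψ).mp hψ _ hmem
  rw [PiLp.inner_apply] at h0
  simp only [RCLike.inner_apply] at h0
  rw [← h0]
  exact Finset.sum_congr rfl fun p _ => by rw [conj_curve, mul_comm]

lemma mem_orthogonal_span' {S : Set (TriH 3 3 3)} {x : TriH 3 3 3}
    (h : ∀ u ∈ S, (inner ℂ u x : ℂ) = 0) : x ∈ (Submodule.span ℂ S)ᗮ := by
  rw [Submodule.mem_orthogonal]
  intro u hu
  induction hu using Submodule.span_induction with
  | mem u hu => exact h u hu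
  | zero => simp
  | add u v _ _ hu hv => rw [inner_add_left, hu, hv, add_zero]
  | smul a u _ hu => rw [inner_smul_left, hu, mul_zero]

/-! ### Coefficient vectors of the curve -/

def wv (m : ℕ) : TriH 3 3 3 := WithLp.toLp 2 fun p : Fin 3 × Fin 3 × Fin 3 =>
  (if p.1 = 0 ∧ m = 3 * (p.2.1 : ℕ) + (p.2.2 : ℕ) then 1 else 0) +
  (if p.1 = 1 ∧ m = 3 * (p.2.1 : ℕ) + (p.2.2 : ℕ) + 1 then 1 else 0) +
  (if p.1 = 1 ∧ m = 3 * (p.2.1 : ℕ) + (p.2.2 : ℕ) + 3 then 1 else 0) +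
  (if p.1 = 2 ∧ m = 3 * (p.2.1 : ℕ) + (p.2.2 : ℕ) + 2 then 1 else 0) +
  (if p.1 = 2 ∧ m = 3 * (p.2.1 : ℕ) + (p.2.2 : ℕ) + 6 then 1 else 0)

lemma conj_wv (m : ℕ) (p : Fin 3 × Fin 3 × Fin 3) :
    (starRingEnd ℂ) (wv m p) = wv m p := by
  simp only [wv, map_add, apply_ite (starRingEnd ℂ), map_one, map_zero]

lemma curve_expand (β : ℂ) (p : Fin 3 × Fin 3 × Fin 3) :
    qutritCurve β p = ∑ n ∈ Finset.range 15, β ^ n * wv n p := by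
  obtain ⟨i, j, k⟩ := p
  fin_cases i <;> fin_cases j <;> fin_cases k <;>
    (simp [qutritCurve, wv, Finset.sum_range_succ]; try ring)

lemma curve_eq_sum (α : ℂ) : qutritCurve α = ∑ n ∈ Finset.range 15, α ^ n • wv n := by
  ext p
  rw [curve_expand, WithLp.ofLp_sum, Finset.sum_apply]
  simp [smul_eq_mul]

lemma wv_indep : LinearIndependent ℂ (fun m : Fin 15 => wv (m : ℕ)) := by
  rw [Fintype.linearIndependent_iff]
  intro c hc
  have h : ∀ p : Fin 3 × Fin 3 × Fin 3, ∑ m : Fin 15, c m * wv (m : ℕ) p = 0 := by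
    intro p
    have := congrFun (congrArg WithLp.ofLp hc) p
    rw [WithLp.ofLp_sum, Finset.sum_apply] at this
    simpa [smul_eq_mul] using this
  have e0 := h (0,0,0); have e1 := h (0,0,1); have e2 := h (0,0,2)
  have e3 := h (0,1,0); have e4 := h (0,1,1); have e5 := h (0,1,2)
  have e6 := h (0,2,0); have e7 := h (0,2,1); have e8 := h (0,2,2)
  have f9 := h (2,1,0); have f10 := h (2,1,1); have f11 := h (2,1,2)
  have f12 := h (2,2,0); have f13 := h (2,2,1); have f14 := h (2,2,2)
  simp [wv, Fin.sum_univ_succ] at e0 e1 e2 e3 e4 e5 e6 e7 e8 f9 f10 f11 f12 f13 f14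
  have e3' : c 3 = 0 := e3
  have e4' : c 4 = 0 := e4
  have e5' : c 5 = 0 := e5
  have e6' : c 6 = 0 := e6
  have e7' : c 7 = 0 := e7
  have e8' : c 8 = 0 := e8
  have f9' : c 5 + c 9 = 0 := f9
  have f10' : c 6 + c 10 = 0 := f10
  have f11' : c 7 + c 11 = 0 := f11
  have f12' : c 8 + c 12 = 0 := f12
  have f13' : c 9 + c 13 = 0 := f13
  have f14' : c 10 + c 14 = 0 := f14
  intro i
  fin_cases i
  · exact e0
  · exact e1
  · exact e2
  · exact e3'
  · exact e4'
  · exact e5'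
  · exact e6'
  · exact e7'
  · exact e8'
  · show c 9 = 0
    linear_combination f9' - e5'
  · show c 10 = 0
    linear_combination f10' - e6'
  · show c 11 = 0
    linear_combination f11' - e7'
  · show c 12 = 0
    linear_combination f12' - e8'
  · show c 13 = 0
    linear_combination f13' - f9' + e5'
  · show c 14 = 0
    linear_combination f14' - f10' + e6'

/-! ### Dimension computation -/

lemma span_le_W :
    Submodule.span ℂ (Set.range qutritCurve) ≤
    Submodule.span ℂ (Set.range (fun m : Fin 15 => wv (m : ℕ))) := by
  rw [Submodule.span_le]
  rintro _ ⟨α, rfl⟩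
  rw [curve_eq_sum]
  refine Submodule.sum_mem _ fun n hn => Submodule.smul_mem _ _ (Submodule.subset_span ?_)
  exact ⟨⟨n, Finset.mem_range.mp hn⟩, rfl⟩

lemma perp_le_Wperp :
    (Submodule.span ℂ (Set.range qutritCurve))ᗮ ≤
    (Submodule.span ℂ (Set.range (fun m : Fin 15 => wv (m : ℕ))))ᗮ := by
  intro ψ hψ
  have key : ∀ n < 15, ∑ p : Fin 3 × Fin 3 × Fin 3, wv n p * ψ p = 0 := by
    apply coeffs_zero
    intro β
    have hx := perp_eval hψ β
    rw [← hx]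
    simp_rw [Finset.sum_mul, curve_expand, Finset.sum_mul]
    rw [Finset.sum_comm]
    exact Finset.sum_congr rfl fun p _ => Finset.sum_congr rfl fun n _ => by ring
  apply mem_orthogonal_span'
  rintro _ ⟨m, rfl⟩
  rw [PiLp.inner_apply]
  simp only [RCLike.inner_apply, conj_wv]
  rw [← key (m : ℕ) m.isLt]
  exact Finset.sum_congr rfl fun p _ => mul_comm _ _

lemma perp_eq_Wperp :
    (Submodule.span ℂ (Set.range qutritCurve))ᗮ =
    (Submodule.span ℂ (Set.range (fun m : Fin 15 => wv (m : ℕ))))ᗮ :=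
  le_antisymm perp_le_Wperp (Submodule.orthogonal_le span_le_W)

lemma perp_finrank :
    Module.finrank ℂ ((Submodule.span ℂ (Set.range qutritCurve))ᗮ : Submodule ℂ (TriH 3 3 3)) = 12 := by
  rw [perp_eq_Wperp]
  have h1 : Module.finrank ℂ
      (Submodule.span ℂ (Set.range (fun m : Fin 15 => wv (m : ℕ)))) = 15 := by
    rw [finrank_span_eq_card wv_indep]
    simp
  have h2 := Submodule.finrank_add_finrank_orthogonal
    (K := Submodule.span ℂ (Set.range (fun m : Fin 15 => wv (m : ℕ))))
  have h3 : Module.finrank ℂ (TriH 3 3 3) = 27 := by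
    simp [finrank_euclideanSpace]
  rw [h1, h3] at h2
  omega

/-- the orthogonal complement of `span{v(α) : α ∈ ℂ}` is a genuinely
entangled subspace of `ℂ³ ⊗ ℂ³ ⊗ ℂ³` of dimension `12`. -/
theorem qutrit_GES_of_dimension_twelve :
    IsGES3 ((Submodule.span ℂ (Set.range qutritCurve))ᗮ) ∧
    Module.finrank ℂ ((Submodule.span ℂ (Set.range qutritCurve))ᗮ : Submodule ℂ (TriH 3 3 3)) = 12 := by
  constructor
  · intro ψ hψ hψ0
    refine ⟨hψ0, ?_, ?_, ?_⟩
    -- Case A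
    · rintro ⟨a, g, hag⟩
      have hfac : ∀ β : ℂ,
          (∑ n ∈ Finset.range 7,
            (if n = 0 then a 0 else if n = 1 then a 1 else if n = 2 then a 2 else
             if n = 3 then a 1 else if n = 6 then a 2 else 0) * β ^ n) *
          (∑ n ∈ Finset.range 9,
            (if n = 0 then g (0,0) else if n = 1 then g (0,1) else if n = 2 then g (0,2) else
             if n = 3 then g (1,0) else if n = 4 then g (1,1) else if n = 5 then g (1,2) else
             if n = 6 then g (2,0) else if n = 7 then g (2,1) else g (2,2)) * β ^ n) = 0 := by
        intro β
        refine Eq.trans ?_ (perp_eval hψ β)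
        symm
        simp [qutritCurve, Fintype.sum_prod_type, Fin.sum_univ_three, Finset.sum_range_succ, hag]
        ring
      rcases mul_coeffs_zero hfac with h | h
      · have ha0 : a 0 = 0 := by simpa using h 0 (by norm_num)
        have ha1 : a 1 = 0 := by simpa using h 1 (by norm_num)
        have ha2 : a 2 = 0 := by simpa using h 2 (by norm_num)
        apply hψ0
        ext p
        obtain ⟨i, j, k⟩ := p
        rw [hag i j k]
        have : a i = 0 := by fin_cases i <;> assumption
        simp [this]
      · have h00 : g (0,0) = 0 := by simpa using h 0 (by norm_num)
        have h01 : g (0,1) = 0 := by simpa using h 1 (by norm_num)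
        have h02 : g (0,2) = 0 := by simpa using h 2 (by norm_num)
        have h10 : g (1,0) = 0 := by simpa using h 3 (by norm_num)
        have h11 : g (1,1) = 0 := by simpa using h 4 (by norm_num)
        have h12 : g (1,2) = 0 := by simpa using h 5 (by norm_num)
        have h20 : g (2,0) = 0 := by simpa using h 6 (by norm_num)
        have h21 : g (2,1) = 0 := by simpa using h 7 (by norm_num)
        have h22 : g (2,2) = 0 := by simpa using h 8 (by norm_num)
        apply hψ0
        ext p
        obtain ⟨i, j, k⟩ := p
        rw [hag i j k]
        have : g (j, k) = 0 := by fin_cases j <;> fin_cases k <;> assumption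
        simp [this]
    -- Case B
    · rintro ⟨b, g, hbg⟩
      have hfac : ∀ β : ℂ,
          (∑ n ∈ Finset.range 7,
            (if n = 0 then b 0 else if n = 3 then b 1 else if n = 6 then b 2 else 0) * β ^ n) *
          (∑ n ∈ Finset.range 9,
            (if n = 0 then g (0,0) else if n = 1 then g (0,1) + g (1,0) else
             if n = 2 then g (0,2) + g (1,1) + g (2,0) else
             if n = 3 then g (1,0) + g (1,2) + g (2,1) else
             if n = 4 then g (1,1) + g (2,2) else if n = 5 then g (1,2) else
             if n = 6 then g (2,0) else if n = 7 then g (2,1) else g (2,2)) * β ^ n) = 0 := by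
        intro β
        refine Eq.trans ?_ (perp_eval hψ β)
        symm
        simp [qutritCurve, Fintype.sum_prod_type, Fin.sum_univ_three, Finset.sum_range_succ, hbg]
        ring
      rcases mul_coeffs_zero hfac with h | h
      · have hb0 : b 0 = 0 := by simpa using h 0 (by norm_num)
        have hb1 : b 1 = 0 := by simpa using h 3 (by norm_num)
        have hb2 : b 2 = 0 := by simpa using h 6 (by norm_num)
        apply hψ0
        ext p
        obtain ⟨i, j, k⟩ := p
        rw [hbg i j k]
        have : b j = 0 := by fin_cases j <;> assumption
        simp [this]
      · have c0 := h 0 (by norm_num); have c1 := h 1 (by norm_num)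
        have c2 := h 2 (by norm_num); have c3 := h 3 (by norm_num)
        have c4 := h 4 (by norm_num); have c5 := h 5 (by norm_num)
        have c6 := h 6 (by norm_num); have c7 := h 7 (by norm_num)
        have c8 := h 8 (by norm_num)
        simp only [if_true, if_false] at c0 c1 c2 c3 c4 c5 c6 c7 c8
        norm_num at c0 c1 c2 c3 c4 c5 c6 c7 c8
        have h00 : g (0,0) = 0 := c0
        have h12 : g (1,2) = 0 := c5
        have h20 : g (2,0) = 0 := c6
        have h21 : g (2,1) = 0 := c7
        have h22 : g (2,2) = 0 := c8
        have h11 : g (1,1) = 0 := by linear_combination c4 - h22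
        have h10 : g (1,0) = 0 := by linear_combination c3 - h12 - h21
        have h01 : g (0,1) = 0 := by linear_combination c1 - h10
        have h02 : g (0,2) = 0 := by linear_combination c2 - h11 - h20
        apply hψ0
        ext p
        obtain ⟨i, j, k⟩ := p
        rw [hbg i j k]
        have : g (i, k) = 0 := by fin_cases i <;> fin_cases k <;> assumption
        simp [this]
    -- Case C
    · rintro ⟨cc, g, hcg⟩
      have hfac : ∀ β : ℂ,
          (∑ n ∈ Finset.range 3,
            (if n = 0 then cc 0 else if n = 1 then cc 1 else cc 2) * β ^ n) *
          (∑ n ∈ Finset.range 13,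
            (if n = 0 then g (0,0) else if n = 1 then g (1,0) else if n = 2 then g (2,0) else
             if n = 3 then g (0,1) + g (1,0) else if n = 4 then g (1,1) else
             if n = 5 then g (2,1) else if n = 6 then g (0,2) + g (1,1) + g (2,0) else
             if n = 7 then g (1,2) else if n = 8 then g (2,2) else
             if n = 9 then g (1,2) + g (2,1) else if n = 12 then g (2,2) else 0) * β ^ n) = 0 := by
        intro β
        refine Eq.trans ?_ (perp_eval hψ β)
        symm
        simp [qutritCurve, Fintype.sum_prod_type, Fin.sum_univ_three, Finset.sum_range_succ, hcg]
        ring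
      rcases mul_coeffs_zero hfac with h | h
      · have hc0 : cc 0 = 0 := by simpa using h 0 (by norm_num)
        have hc1 : cc 1 = 0 := by simpa using h 1 (by norm_num)
        have hc2 : cc 2 = 0 := by simpa using h 2 (by norm_num)
        apply hψ0
        ext p
        obtain ⟨i, j, k⟩ := p
        rw [hcg i j k]
        have : cc k = 0 := by fin_cases k <;> assumption
        simp [this]
      · have c0 := h 0 (by norm_num); have c1 := h 1 (by norm_num)
        have c2 := h 2 (by norm_num); have c3 := h 3 (by norm_num)
        have c4 := h 4 (by norm_num); have c5 := h 5 (by norm_num)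
        have c6 := h 6 (by norm_num); have c7 := h 7 (by norm_num)
        have c8 := h 8 (by norm_num)
        norm_num at c0 c1 c2 c3 c4 c5 c6 c7 c8
        have h00 : g (0,0) = 0 := c0
        have h10 : g (1,0) = 0 := c1
        have h20 : g (2,0) = 0 := c2
        have h11 : g (1,1) = 0 := c4
        have h21 : g (2,1) = 0 := c5
        have h12 : g (1,2) = 0 := c7
        have h22 : g (2,2) = 0 := c8
        have h01 : g (0,1) = 0 := by linear_combination c3 - h10
        have h02 : g (0,2) = 0 := by linear_combination c6 - h11 - h20
        apply hψ0
        ext p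
        obtain ⟨i, j, k⟩ := p
        rw [hcg i j k]
        have : g (i, j) = 0 := by fin_cases i <;> fin_cases j <;> assumption
        simp [this]
  · exact perp_finrank
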